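/- Let C be a non-contracting strict globular ω-category, and x, y : Δⁿ → PC ω-functors with T(x) = S(y). If for some face σ₀ of Δⁿ the morphism x(σ₀) *₀ y(σ₀) is 0-dimensional in C, then for every face σ of Δⁿ, x(σ) *₀ y(σ) is the 0-morphism S(x) = T(y); i.e., x*y is the constant map with value S(x). -/

import Mathlib

/-- A strict globular ω-category: a set `A` with a family of compositions,
source and target maps `(*ₙ, sₙ, tₙ)` satisfying the 1-category axioms in each
degree, the globular axioms, the interchange law, the compatibility of
sources/targets with compositions in different degrees, and finiteness of
dimension.  `comp n x y` is only meaningful when `tgt n x = src n y`. -/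
structure OmegaCat where
  A : Type
  comp : ℕ → A → A → A
  src : ℕ → A → A
  tgt : ℕ → A → A
  src_comp : ∀ n x y, tgt n x = src n y → src n (comp n x y) = src n x
  tgt_comp : ∀ n x y, tgt n x = src n y → tgt n (comp n x y) = tgt n y
  comp_src_unit : ∀ n x, comp n (src n x) x = x
  comp_tgt_unit : ∀ n x, comp n x (tgt n x) = x
  comp_assoc : ∀ n x y z, tgt n x = src n y → tgt n y = src n z →
    comp n (comp n x y) z = comp n x (comp n y z)
  src_src_le : ∀ i j, j ≤ i → ∀ x, src i (src j x) = src j x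
  tgt_src_le : ∀ i j, j ≤ i → ∀ x, tgt i (src j x) = src j x
  src_tgt_le : ∀ i j, j ≤ i → ∀ x, src i (tgt j x) = tgt j x
  tgt_tgt_le : ∀ i j, j ≤ i → ∀ x, tgt i (tgt j x) = tgt j x
  src_src_lt : ∀ i j, i < j → ∀ x, src i (src j x) = src i x
  src_tgt_lt : ∀ i j, i < j → ∀ x, src i (tgt j x) = src i x
  tgt_src_lt : ∀ i j, i < j → ∀ x, tgt i (src j x) = tgt i x
  tgt_tgt_lt : ∀ i j, i < j → ∀ x, tgt i (tgt j x) = tgt i x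
  interchange : ∀ p q, p < q → ∀ x y z t,
    tgt p x = src p y → tgt p z = src p t → tgt q x = src q z → tgt q y = src q t →
    comp q (comp p x y) (comp p z t) = comp p (comp q x z) (comp q y t)
  src_comp_ne : ∀ i j, i ≠ j → ∀ x y, tgt j x = src j y →
    src i (comp j x y) = comp j (src i x) (src i y)
  tgt_comp_ne : ∀ i j, i ≠ j → ∀ x y, tgt j x = src j y →
    tgt i (comp j x y) = comp j (tgt i x) (tgt i y)
  finiteDim : ∀ x, ∃ n, src n x = x ∧ tgt n x = x

namespace OmegaCat

variable (C : OmegaCat)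

/-- `x` has dimension at most `n`. -/
def dimLE (n : ℕ) (x : C.A) : Prop := C.src n x = x ∧ C.tgt n x = x

/-- `x` has dimension at least 1 (strictly positive dimension). -/
def PosDim (x : C.A) : Prop := ¬ C.dimLE 0 x

/-- `x` is exactly 1-dimensional. -/
def OneDim (x : C.A) : Prop := C.dimLE 1 x ∧ ¬ C.dimLE 0 x

/-- `s₁` and `t₁` are non-contracting: for `x` of dimension ≥ 1, `s₁ x` and
`t₁ x` are 1-dimensional. -/
def NonContracting : Prop :=
  ∀ x : C.A, C.PosDim x → C.OneDim (C.src 1 x) ∧ C.OneDim (C.tgt 1 x)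

end OmegaCat

/-- A face of the `n`-simplex: a nonempty strictly increasing sequence in
`{0, …, n}`, encoded as a nonempty subset of `Fin (n+1)`. -/
def SimplexFace (n : ℕ) : Type := {s : Finset (Fin (n+1)) // s.Nonempty}

/-- The face obtained from `σ` by deleting the element in position `i`
(positions in the increasing enumeration of `σ`, counted from 0). -/
def delPos {n : ℕ} (σ : Finset (Fin (n+1))) (i : ℕ) : Finset (Fin (n+1)) :=
  ((σ.sort (· ≤ ·)).eraseIdx i).toFinset

/-- `Gen C S x`: `x` is an iterated composite of elements of `S` in the
ω-category `C`. -/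
inductive Gen (C : OmegaCat) (S : Set C.A) : C.A → Prop
  | of {x : C.A} : x ∈ S → Gen C S x
  | cmp {p : ℕ} {x y : C.A} : Gen C S x → Gen C S y → C.tgt p x = C.src p y →
      Gen C S (C.comp p x y)

/-- A presentation of Street's free ω-category `Δⁿ` generated by the faces of
the `n`-simplex: an ω-category `D` with an injection `R` of the faces, in which
every element is a composite of faces, `R σ` has the dimension of `σ`, and the
`(p-1)`-source (resp. target) of a `p`-dimensional face `R σ` is a composite of
the subfaces of the faces obtained from `σ` by removing one element in odd
(resp. even) position. -/
structure SimplexStruct (n : ℕ) where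
  D : OmegaCat
  R : SimplexFace n → D.A
  inj : Function.Injective R
  dim_le : ∀ σ : SimplexFace n, D.dimLE (σ.1.card - 1) (R σ)
  dim_exact : ∀ σ : SimplexFace n, 2 ≤ σ.1.card → ¬ D.dimLE (σ.1.card - 2) (R σ)
  src_boundary : ∀ σ : SimplexFace n, 2 ≤ σ.1.card →
    Gen D {y | ∃ τ : SimplexFace n,
        (∃ i, i < σ.1.card ∧ Odd i ∧ τ.1 ⊆ delPos σ.1 i) ∧ y = R τ}
      (D.src (σ.1.card - 2) (R σ))
  tgt_boundary : ∀ σ : SimplexFace n, 2 ≤ σ.1.card →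
    Gen D {y | ∃ τ : SimplexFace n,
        (∃ i, i < σ.1.card ∧ Even i ∧ τ.1 ⊆ delPos σ.1 i) ∧ y = R τ}
      (D.tgt (σ.1.card - 2) (R σ))
  generates : ∀ x : D.A, Gen D (Set.range R) x

/-- An ω-functor from `D` to the path ω-category `PC` of `C`: a map landing in
the morphisms of strictly positive dimension, sending the `m`-source,
`m`-target and `*ₘ`-composition of `D` to the `(m+1)`-source, `(m+1)`-target
and `*ₘ₊₁`-composition of `C`. -/
structure ToPathFunctor (D C : OmegaCat) where
  f : D.A → C.A
  pos : ∀ d, C.PosDim (f d)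
  map_src : ∀ m d, f (D.src m d) = C.src (m+1) (f d)
  map_tgt : ∀ m d, f (D.tgt m d) = C.tgt (m+1) (f d)
  map_comp : ∀ m a b, D.tgt m a = D.src m b →
    f (D.comp m a b) = C.comp (m+1) (f a) (f b)

namespace OmegaCat

variable {C : OmegaCat}

lemma src_eq_of_dim0 {z : C.A} (h : C.dimLE 0 z) (k : ℕ) : C.src k z = z := by
  conv_lhs => rw [← h.1]
  rw [C.src_src_le k 0 (Nat.zero_le k), h.1]

lemma tgt_eq_of_dim0 {z : C.A} (h : C.dimLE 0 z) (k : ℕ) : C.tgt k z = z := by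
  conv_lhs => rw [← h.1]
  rw [C.tgt_src_le k 0 (Nat.zero_le k), h.1]

lemma comp_self_of_dim0 {z : C.A} (h : C.dimLE 0 z) (k : ℕ) : C.comp k z z = z := by
  nth_rewrite 1 [← src_eq_of_dim0 h k]
  exact C.comp_src_unit k z

lemma dim0_of_src_succ (hC : C.NonContracting) {w : C.A} {m : ℕ}
    (h : C.dimLE 0 (C.src (m+1) w)) : C.dimLE 0 w := by
  by_contra hw
  refine (hC w hw).1.2 ?_
  rcases Nat.lt_or_ge 1 (m+1) with hm | hm
  · rw [← C.src_src_lt 1 (m+1) hm w, src_eq_of_dim0 h 1]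
    exact h
  · obtain rfl : m = 0 := by omega
    exact h

lemma dim0_of_tgt_succ (hC : C.NonContracting) {w : C.A} {m : ℕ}
    (h : C.dimLE 0 (C.tgt (m+1) w)) : C.dimLE 0 w := by
  by_contra hw
  refine (hC w hw).2.2 ?_
  rcases Nat.lt_or_ge 1 (m+1) with hm | hm
  · rw [← C.tgt_tgt_lt 1 (m+1) hm w, tgt_eq_of_dim0 h 1]
    exact h
  · obtain rfl : m = 0 := by omega
    exact h

end OmegaCat

section Machinery

variable {n : ℕ} {S : SimplexStruct n} {C : OmegaCat}

/-- The pointwise `*₀` composition of two functors. -/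
def Zc (x y : ToPathFunctor S.D C) (d : S.D.A) : C.A := C.comp 0 (x.f d) (y.f d)

variable (x y : ToPathFunctor S.D C)

lemma Zc_src (hT : ∀ d d' : S.D.A, C.tgt 0 (x.f d) = C.src 0 (y.f d')) (m : ℕ) (d : S.D.A) :
    Zc x y (S.D.src m d) = C.src (m+1) (Zc x y d) := by
  unfold Zc
  rw [x.map_src, y.map_src, C.src_comp_ne (m+1) 0 (by omega) _ _ (hT d d)]

lemma Zc_tgt (hT : ∀ d d' : S.D.A, C.tgt 0 (x.f d) = C.src 0 (y.f d')) (m : ℕ) (d : S.D.A) :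
    Zc x y (S.D.tgt m d) = C.tgt (m+1) (Zc x y d) := by
  unfold Zc
  rw [x.map_tgt, y.map_tgt, C.tgt_comp_ne (m+1) 0 (by omega) _ _ (hT d d)]

lemma Zc_comp (hT : ∀ d d' : S.D.A, C.tgt 0 (x.f d) = C.src 0 (y.f d'))
    {p : ℕ} {a b : S.D.A} (hab : S.D.tgt p a = S.D.src p b) :
    Zc x y (S.D.comp p a b) = C.comp (p+1) (Zc x y a) (Zc x y b) := by
  unfold Zc
  rw [x.map_comp p a b hab, y.map_comp p a b hab]
  have hx : C.tgt (p+1) (x.f a) = C.src (p+1) (x.f b) := by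
    rw [← x.map_tgt, ← x.map_src, hab]
  have hy : C.tgt (p+1) (y.f a) = C.src (p+1) (y.f b) := by
    rw [← y.map_tgt, ← y.map_src, hab]
  exact (C.interchange 0 (p+1) (by omega) (x.f a) (y.f a) (x.f b) (y.f b)
    (hT a a) (hT b b) hx hy).symm

lemma Zc_tgt_src (hT : ∀ d d' : S.D.A, C.tgt 0 (x.f d) = C.src 0 (y.f d'))
    {p : ℕ} {a b : S.D.A} (hab : S.D.tgt p a = S.D.src p b) :
    C.tgt (p+1) (Zc x y a) = C.src (p+1) (Zc x y b) := by
  unfold Zc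
  have hx : C.tgt (p+1) (x.f a) = C.src (p+1) (x.f b) := by
    rw [← x.map_tgt, ← x.map_src, hab]
  have hy : C.tgt (p+1) (y.f a) = C.src (p+1) (y.f b) := by
    rw [← y.map_tgt, ← y.map_src, hab]
  rw [C.tgt_comp_ne (p+1) 0 (by omega) _ _ (hT a a),
      C.src_comp_ne (p+1) 0 (by omega) _ _ (hT b b), hx, hy]

variable (hC : C.NonContracting)
variable (hT : ∀ d d' : S.D.A, C.tgt 0 (x.f d) = C.src 0 (y.f d'))
variable {z₀ : C.A} (hz : C.dimLE 0 z₀)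

include hC hT hz

lemma P_src_iff (m : ℕ) (d : S.D.A) :
    Zc x y (S.D.src m d) = z₀ ↔ Zc x y d = z₀ := by
  rw [Zc_src x y hT]
  constructor
  · intro h
    have h0 : C.dimLE 0 (C.src (m+1) (Zc x y d)) := h ▸ hz
    have hd := OmegaCat.dim0_of_src_succ hC h0
    rw [← OmegaCat.src_eq_of_dim0 hd (m+1)]
    exact h
  · intro h
    rw [h, OmegaCat.src_eq_of_dim0 hz (m+1)]

lemma P_tgt_iff (m : ℕ) (d : S.D.A) :
    Zc x y (S.D.tgt m d) = z₀ ↔ Zc x y d = z₀ := by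
  rw [Zc_tgt x y hT]
  constructor
  · intro h
    have h0 : C.dimLE 0 (C.tgt (m+1) (Zc x y d)) := h ▸ hz
    have hd := OmegaCat.dim0_of_tgt_succ hC h0
    rw [← OmegaCat.tgt_eq_of_dim0 hd (m+1)]
    exact h
  · intro h
    rw [h, OmegaCat.tgt_eq_of_dim0 hz (m+1)]

lemma P_comp {p : ℕ} {a b : S.D.A} (hab : S.D.tgt p a = S.D.src p b)
    (ha : Zc x y a = z₀) (hb : Zc x y b = z₀) :
    Zc x y (S.D.comp p a b) = z₀ := by
  rw [Zc_comp x y hT hab, ha, hb, OmegaCat.comp_self_of_dim0 hz (p+1)]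

lemma P_comp_left {p : ℕ} {a b : S.D.A} (hab : S.D.tgt p a = S.D.src p b)
    (h : Zc x y (S.D.comp p a b) = z₀) : Zc x y a = z₀ := by
  have h1 : C.src (p+1) (Zc x y a) = z₀ := by
    rw [← C.src_comp (p+1) _ _ (Zc_tgt_src x y hT hab), ← Zc_comp x y hT hab, h,
        OmegaCat.src_eq_of_dim0 hz (p+1)]
  have h0 : C.dimLE 0 (C.src (p+1) (Zc x y a)) := h1 ▸ hz
  have h2 := OmegaCat.dim0_of_src_succ hC h0
  rw [← OmegaCat.src_eq_of_dim0 h2 (p+1)]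
  exact h1

lemma Gen_forall {S' : Set S.D.A} {d : S.D.A} (hd : Gen S.D S' d)
    (hall : ∀ s ∈ S', Zc x y s = z₀) : Zc x y d = z₀ := by
  induction hd with
  | of h => exact hall _ h
  | cmp hga hgb hab iha ihb => exact P_comp x y hC hT hz hab iha ihb

lemma Gen_exists {S' : Set S.D.A} {d : S.D.A} (hd : Gen S.D S' d) :
    Zc x y d = z₀ → ∃ s ∈ S', Zc x y s = z₀ := by
  induction hd with
  | of hmem => exact fun h => ⟨_, hmem, h⟩
  | cmp hga hgb hab iha ihb => exact fun h => iha (P_comp_left x y hC hT hz hab h)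

end Machinery

section FaceLemmas

lemma delPos_card_lt {n : ℕ} {σ : Finset (Fin (n+1))} {i : ℕ} (hi : i < σ.card) :
    (delPos σ i).card < σ.card := by
  have hlen : ((σ.sort (· ≤ ·)).eraseIdx i).length = σ.card - 1 := by
    rw [List.length_eraseIdx]
    simp [Finset.length_sort, hi]
  calc (delPos σ i).card ≤ ((σ.sort (· ≤ ·)).eraseIdx i).length := List.toFinset_card_le _
    _ = σ.card - 1 := hlen
    _ < σ.card := Nat.sub_lt (by omega) one_pos

lemma sort_pair' {n : ℕ} {a b : Fin (n+1)} (h : a < b) :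
    Finset.sort ({a, b} : Finset (Fin (n+1))) (· ≤ ·) = [a, b] := by
  have := Finset.sort_insert (r := (· ≤ ·)) (a := a) (s := {b})
    (by simp [h.le]) (by simp [h.ne])
  rw [this, Finset.sort_singleton]

lemma delPos_pair_one {n : ℕ} {a b : Fin (n+1)} (h : a < b) :
    delPos {a, b} 1 = {a} := by
  unfold delPos
  rw [sort_pair' h]
  simp

lemma delPos_pair_zero {n : ℕ} {a b : Fin (n+1)} (h : a < b) :
    delPos {a, b} 0 = {b} := by
  unfold delPos
  rw [sort_pair' h]
  simp

lemma eq_singleton_of_subset {n : ℕ} {τ : SimplexFace n} {a : Fin (n+1)}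
    (h : τ.1 ⊆ {a}) : τ = ⟨{a}, Finset.singleton_nonempty a⟩ := by
  rcases Finset.subset_singleton_iff.mp h with h' | h'
  · exact absurd h' (Finset.nonempty_iff_ne_empty.mp τ.2)
  · exact Subtype.ext h'

end FaceLemmas

/-- If `x, y : Δⁿ → PC` are ω-functors with `T(x) = S(y)` and for some face
`σ₀` the composite `x(σ₀) *₀ y(σ₀)` is `0`-dimensional, then for every face
`σ`, `x(σ) *₀ y(σ)` is the `0`-morphism `S(x) = T(y)`: the map `x*y` is
constant with value `S(x)`. -/
theorem stmt10 (n : ℕ) (S : SimplexStruct n) (C : OmegaCat)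
    (hC : C.NonContracting) (x y : ToPathFunctor S.D C)
    (hT : ∀ d d' : S.D.A, C.tgt 0 (x.f d) = C.src 0 (y.f d'))
    (σ₀ : SimplexFace n)
    (h0 : C.dimLE 0 (C.comp 0 (x.f (S.R σ₀)) (y.f (S.R σ₀)))) :
    ∀ σ τ : SimplexFace n,
      C.comp 0 (x.f (S.R σ)) (y.f (S.R σ)) = C.src 0 (x.f (S.R τ)) ∧
      C.src 0 (x.f (S.R τ)) = C.tgt 0 (y.f (S.R τ)) := by

  intro σ' τ'
  revert σ' τ'
  set z₀ := C.comp 0 (x.f (S.R σ₀)) (y.f (S.R σ₀)) with hz₀def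
  have hz : C.dimLE 0 z₀ := h0
  have hP0 : Zc x y (S.R σ₀) = z₀ := rfl
  have up_src : ∀ σ : SimplexFace n, 2 ≤ σ.1.card →
      (∀ τ : SimplexFace n, (∃ i, i < σ.1.card ∧ Odd i ∧ τ.1 ⊆ delPos σ.1 i) →
        Zc x y (S.R τ) = z₀) → Zc x y (S.R σ) = z₀ := by
    intro σ hcard hsub
    refine (P_src_iff x y hC hT hz (σ.1.card - 2) (S.R σ)).mp ?_
    refine Gen_forall x y hC hT hz (S.src_boundary σ hcard) ?_
    rintro s ⟨τ, hτ, rfl⟩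
    exact hsub τ hτ
  have up_tgt : ∀ σ : SimplexFace n, 2 ≤ σ.1.card →
      (∀ τ : SimplexFace n, (∃ i, i < σ.1.card ∧ Even i ∧ τ.1 ⊆ delPos σ.1 i) →
        Zc x y (S.R τ) = z₀) → Zc x y (S.R σ) = z₀ := by
    intro σ hcard hsub
    refine (P_tgt_iff x y hC hT hz (σ.1.card - 2) (S.R σ)).mp ?_
    refine Gen_forall x y hC hT hz (S.tgt_boundary σ hcard) ?_
    rintro s ⟨τ, hτ, rfl⟩
    exact hsub τ hτ
  have down_src : ∀ σ : SimplexFace n, 2 ≤ σ.1.card → Zc x y (S.R σ) = z₀ →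
      ∃ τ : SimplexFace n, (∃ i, i < σ.1.card ∧ Odd i ∧ τ.1 ⊆ delPos σ.1 i) ∧
        Zc x y (S.R τ) = z₀ := by
    intro σ hcard hσ
    have h1 : Zc x y (S.D.src (σ.1.card - 2) (S.R σ)) = z₀ :=
      (P_src_iff x y hC hT hz _ _).mpr hσ
    obtain ⟨s, ⟨τ, hτ, rfl⟩, hs⟩ := Gen_exists x y hC hT hz (S.src_boundary σ hcard) h1
    exact ⟨τ, hτ, hs⟩
  have down_tgt : ∀ σ : SimplexFace n, 2 ≤ σ.1.card → Zc x y (S.R σ) = z₀ →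
      ∃ τ : SimplexFace n, (∃ i, i < σ.1.card ∧ Even i ∧ τ.1 ⊆ delPos σ.1 i) ∧
        Zc x y (S.R τ) = z₀ := by
    intro σ hcard hσ
    have h1 : Zc x y (S.D.tgt (σ.1.card - 2) (S.R σ)) = z₀ :=
      (P_tgt_iff x y hC hT hz _ _).mpr hσ
    obtain ⟨s, ⟨τ, hτ, rfl⟩, hs⟩ := Gen_exists x y hC hT hz (S.tgt_boundary σ hcard) h1
    exact ⟨τ, hτ, hs⟩
  have edge_fwd : ∀ a b : Fin (n+1), a < b →
      Zc x y (S.R ⟨{a}, Finset.singleton_nonempty a⟩) = z₀ →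
      Zc x y (S.R ⟨{b}, Finset.singleton_nonempty b⟩) = z₀ := by
    intro a b hab ha
    set e : SimplexFace n := ⟨{a, b}, Finset.insert_nonempty a {b}⟩ with he
    have hcard : e.1.card = 2 := Finset.card_pair hab.ne
    have hPe : Zc x y (S.R e) = z₀ := by
      refine up_src e (by omega) ?_
      rintro τ ⟨i, hi, hodd, hsub⟩
      have hi1 : i = 1 := by rcases hodd with ⟨m, hm⟩; omega
      subst hi1
      rw [show e.1 = ({a, b} : Finset (Fin (n+1))) from rfl, delPos_pair_one hab] at hsub
      rw [eq_singleton_of_subset hsub]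
      exact ha
    obtain ⟨τ, ⟨i, hi, heven, hsub⟩, hτ⟩ := down_tgt e (by omega) hPe
    have hi0 : i = 0 := by rcases heven with ⟨m, hm⟩; omega
    subst hi0
    rw [show e.1 = ({a, b} : Finset (Fin (n+1))) from rfl, delPos_pair_zero hab] at hsub
    rwa [eq_singleton_of_subset hsub] at hτ
  have edge_bwd : ∀ a b : Fin (n+1), a < b →
      Zc x y (S.R ⟨{b}, Finset.singleton_nonempty b⟩) = z₀ →
      Zc x y (S.R ⟨{a}, Finset.singleton_nonempty a⟩) = z₀ := by
    intro a b hab hb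
    set e : SimplexFace n := ⟨{a, b}, Finset.insert_nonempty a {b}⟩ with he
    have hcard : e.1.card = 2 := Finset.card_pair hab.ne
    have hPe : Zc x y (S.R e) = z₀ := by
      refine up_tgt e (by omega) ?_
      rintro τ ⟨i, hi, heven, hsub⟩
      have hi0 : i = 0 := by rcases heven with ⟨m, hm⟩; omega
      subst hi0
      rw [show e.1 = ({a, b} : Finset (Fin (n+1))) from rfl, delPos_pair_zero hab] at hsub
      rw [eq_singleton_of_subset hsub]
      exact hb
    obtain ⟨τ, ⟨i, hi, hodd, hsub⟩, hτ⟩ := down_src e (by omega) hPe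
    have hi1 : i = 1 := by rcases hodd with ⟨m, hm⟩; omega
    subst hi1
    rw [show e.1 = ({a, b} : Finset (Fin (n+1))) from rfl, delPos_pair_one hab] at hsub
    rwa [eq_singleton_of_subset hsub] at hτ
  have down_vert : ∀ (c : ℕ) (σ : SimplexFace n), σ.1.card ≤ c → Zc x y (S.R σ) = z₀ →
      ∃ v : Fin (n+1), Zc x y (S.R ⟨{v}, Finset.singleton_nonempty v⟩) = z₀ := by
    intro c
    induction c with
    | zero =>
      intro σ hc _
      exact absurd hc (by have := Finset.card_pos.mpr σ.2; omega)
    | succ c ih =>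
      intro σ hc hσ
      rcases Nat.lt_or_ge σ.1.card 2 with h2 | h2
      · have h1 : σ.1.card = 1 := by have := Finset.card_pos.mpr σ.2; omega
        obtain ⟨v, hv⟩ := Finset.card_eq_one.mp h1
        refine ⟨v, ?_⟩
        have hσv : σ = ⟨{v}, Finset.singleton_nonempty v⟩ := Subtype.ext hv
        rwa [← hσv]
      · obtain ⟨τ, ⟨i, hi, _, hsub⟩, hτ⟩ := down_src σ h2 hσ
        refine ih τ ?_ hτ
        have h3 := Finset.card_le_card hsub
        have h4 := delPos_card_lt (σ := σ.1) hi
        omega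
  have up_all : ∀ (c : ℕ) (σ : SimplexFace n), σ.1.card ≤ c →
      (∀ v : Fin (n+1), Zc x y (S.R ⟨{v}, Finset.singleton_nonempty v⟩) = z₀) →
      Zc x y (S.R σ) = z₀ := by
    intro c
    induction c with
    | zero =>
      intro σ hc _
      exact absurd hc (by have := Finset.card_pos.mpr σ.2; omega)
    | succ c ih =>
      intro σ hc hvert
      rcases Nat.lt_or_ge σ.1.card 2 with h2 | h2
      · have h1 : σ.1.card = 1 := by have := Finset.card_pos.mpr σ.2; omega
        obtain ⟨v, hv⟩ := Finset.card_eq_one.mp h1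
        have hσv : σ = ⟨{v}, Finset.singleton_nonempty v⟩ := Subtype.ext hv
        rw [hσv]
        exact hvert v
      · refine up_src σ h2 ?_
        rintro τ ⟨i, hi, _, hsub⟩
        refine ih τ ?_ hvert
        have h3 := Finset.card_le_card hsub
        have h4 := delPos_card_lt (σ := σ.1) hi
        omega
  obtain ⟨v₀, hv₀⟩ := down_vert σ₀.1.card σ₀ le_rfl hP0
  have hvert : ∀ v : Fin (n+1), Zc x y (S.R ⟨{v}, Finset.singleton_nonempty v⟩) = z₀ := by
    intro v
    rcases lt_trichotomy v₀ v with h | h | h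
    · exact edge_fwd v₀ v h hv₀
    · exact h ▸ hv₀
    · exact edge_bwd v v₀ h hv₀
  have hall : ∀ σ : SimplexFace n, C.comp 0 (x.f (S.R σ)) (y.f (S.R σ)) = z₀ :=
    fun σ => up_all σ.1.card σ le_rfl hvert
  intro σ τ
  have hsτ : C.src 0 (x.f (S.R τ)) = z₀ := by
    rw [← C.src_comp 0 _ _ (hT _ _), hall τ, hz.1]
  have htτ : C.tgt 0 (y.f (S.R τ)) = z₀ := by
    rw [← C.tgt_comp 0 _ _ (hT _ _), hall τ, hz.2]
  exact ⟨by rw [hall σ, hsτ], by rw [hsτ, htτ]⟩
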